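/- If a pair (E₁,E₂) is achievable by γ-almost-fixed-length tests, then the triple (E₁,E₂,γ) is achievable by fixed-length tests with rejection. -/
import Mathlib


open Real Filter Finset MeasureTheory
open scoped Classical

variable {𝒳 : Type*} [Fintype 𝒳] [DecidableEq 𝒳] [Nonempty 𝒳]

/-- Kullback–Leibler divergence `D(Q‖P)` between pmfs on a finite alphabet. -/
noncomputable def kl (Q P : 𝒳 → ℝ) : ℝ :=
  ∑ x, Q x * Real.log (Q x / P x)

/-- The `λ`-tilted distribution `P^(λ)` of `P₁` and `P₂`. -/
noncomputable def tilt (P₁ P₂ : 𝒳 → ℝ) (l : ℝ) : 𝒳 → ℝ :=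
  fun x => P₁ x ^ (1 - l) * P₂ x ^ l / ∑ a, P₁ a ^ (1 - l) * P₂ a ^ l

/-- Probability of a set of length-`N` sample paths under i.i.d. sampling from `P`. -/
noncomputable def prodProb (P : 𝒳 → ℝ) {N : ℕ} (S : Set (Fin N → 𝒳)) : ℝ :=
  ∑ ω : Fin N → 𝒳, S.indicator (fun ω' => ∏ i, P (ω' i)) ω

/-- The fixed-length error-exponent region `R_FD`. -/
def RFD (P₁ P₂ : 𝒳 → ℝ) : Set (ℝ × ℝ) :=
  {p | 0 ≤ p.1 ∧ 0 ≤ p.2 ∧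
    ∃ l ∈ Set.Icc (0:ℝ) 1,
      p.1 ≤ kl (tilt P₁ P₂ l) P₁ ∧ p.2 ≤ kl (tilt P₁ P₂ l) P₂}

/-- `E₁(γ) = max{D(P^(λ)‖P₁) : λ ∈ [0,1], D(P^(λ)‖P₂) ≥ γ}` (sup of the empty set is 0). -/
noncomputable def E1exp (P₁ P₂ : 𝒳 → ℝ) (γ : ℝ) : ℝ :=
  sSup {E | ∃ l ∈ Set.Icc (0:ℝ) 1, γ ≤ kl (tilt P₁ P₂ l) P₂ ∧ E = kl (tilt P₁ P₂ l) P₁}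

/-- `E₂(γ) = max{D(P^(λ)‖P₂) : λ ∈ [0,1], D(P^(λ)‖P₁) ≥ γ}` (sup of the empty set is 0). -/
noncomputable def E2exp (P₁ P₂ : 𝒳 → ℝ) (γ : ℝ) : ℝ :=
  sSup {E | ∃ l ∈ Set.Icc (0:ℝ) 1, γ ≤ kl (tilt P₁ P₂ l) P₁ ∧ E = kl (tilt P₁ P₂ l) P₂}

/-- A sequential hypothesis test whose stopping time is bounded by `N`:
a stopping time `τ` for the coordinate filtration, together with decision events
`A1`, `A2` that are determined by the samples observed up to time `τ`,
are disjoint, and exhaust the sample space. -/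
structure HypTest (𝒳 : Type*) (N : ℕ) where
  τ : (Fin N → 𝒳) → ℕ
  A1 : Set (Fin N → 𝒳)
  A2 : Set (Fin N → 𝒳)
  tau_le : ∀ ω, τ ω ≤ N
  stopping : ∀ ω ω', (∀ i : Fin N, (i : ℕ) < τ ω → ω i = ω' i) → τ ω' = τ ω
  adapted1 : ∀ ω ω', (∀ i : Fin N, (i : ℕ) < τ ω → ω i = ω' i) → (ω ∈ A1 ↔ ω' ∈ A1)
  adapted2 : ∀ ω ω', (∀ i : Fin N, (i : ℕ) < τ ω → ω i = ω' i) → (ω ∈ A2 ↔ ω' ∈ A2)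
  disj : Disjoint A1 A2
  exhaust : A1 ∪ A2 = Set.univ

/-- `(E₁, E₂)` is achievable by `γ`-almost-fixed-length tests. -/
def AFLAchievable (P₁ P₂ : 𝒳 → ℝ) (γ E₁ E₂ : ℝ) : Prop :=
  0 ≤ E₁ ∧ 0 ≤ E₂ ∧
  ∃ c : ℝ, 0 < c ∧ ∃ l : ℕ, 0 < l ∧
    ∀ δ : ℝ, 0 < δ → ∃ n₀ : ℕ, ∀ n : ℕ, n₀ ≤ n →
      ∃ N : ℕ, (N : ℝ) ≤ c * (n : ℝ) ^ l ∧
        ∃ T : HypTest 𝒳 N,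
          prodProb P₁ {ω | n < T.τ ω} ≤ Real.exp (-(γ * n)) ∧
          prodProb P₂ {ω | n < T.τ ω} ≤ Real.exp (-(γ * n)) ∧
          prodProb P₁ T.A2 ≤ Real.exp (-((E₁ - δ) * n)) ∧
          prodProb P₂ T.A1 ≤ Real.exp (-((E₂ - δ) * n))

/-- `(E₁, E₂, E_Ω)` is achievable by fixed-length tests with a rejection option. -/
def RejAchievable (P₁ P₂ : 𝒳 → ℝ) (E₁ E₂ EΩ : ℝ) : Prop :=
  0 ≤ E₁ ∧ 0 ≤ E₂ ∧ 0 ≤ EΩ ∧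
  ∀ δ : ℝ, 0 < δ → ∃ n₀ : ℕ, ∀ n : ℕ, n₀ ≤ n →
    ∃ A1 A2 AΩ : Set (Fin n → 𝒳),
      Disjoint A1 A2 ∧ Disjoint A1 AΩ ∧ Disjoint A2 AΩ ∧ A1 ∪ A2 ∪ AΩ = Set.univ ∧
      prodProb P₁ A2 ≤ Real.exp (-((E₁ - δ) * n)) ∧
      prodProb P₂ A1 ≤ Real.exp (-((E₂ - δ) * n)) ∧
      prodProb P₁ AΩ + prodProb P₂ AΩ ≤ Real.exp (-((EΩ - δ) * n))

/-- Sum of the log-likelihood ratios of the first `n` samples. -/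
noncomputable def S1 (P₁ P₂ : 𝒳 → ℝ) (n : ℕ) {N : ℕ} (ω : Fin N → 𝒳) : ℝ :=
  ∑ i ∈ Finset.univ.filter (fun i : Fin N => (i : ℕ) < n),
    Real.log (P₁ (ω i) / P₂ (ω i))

/-- Sum of the log-likelihood ratios of the samples after time `n`. -/
noncomputable def S2 (P₁ P₂ : 𝒳 → ℝ) (n : ℕ) {N : ℕ} (ω : Fin N → 𝒳) : ℝ :=
  ∑ i ∈ Finset.univ.filter (fun i : Fin N => n ≤ (i : ℕ)),
    Real.log (P₁ (ω i) / P₂ (ω i))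

/-- Event that the two-phase test (phase-one thresholds `α₁ > β₁`, phase-two threshold `α`)
chooses `H₁`. -/
def twoPhaseA1 (P₁ P₂ : 𝒳 → ℝ) (k n : ℕ) (α₁ β₁ α : ℝ) : Set (Fin ((k + 1) * n) → 𝒳) :=
  {ω | α₁ ≤ S1 P₁ P₂ n ω / n ∨
    (β₁ < S1 P₁ P₂ n ω / n ∧ S1 P₁ P₂ n ω / n < α₁ ∧ α ≤ S2 P₁ P₂ n ω / (k * n))}

/-- Event that the two-phase test chooses `H₂`. -/
def twoPhaseA2 (P₁ P₂ : 𝒳 → ℝ) (k n : ℕ) (α₁ β₁ α : ℝ) : Set (Fin ((k + 1) * n) → 𝒳) :=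
  {ω | S1 P₁ P₂ n ω / n ≤ β₁ ∨
    (β₁ < S1 P₁ P₂ n ω / n ∧ S1 P₁ P₂ n ω / n < α₁ ∧ S2 P₁ P₂ n ω / (k * n) < α)}

/-- Stopping time of the two-phase test: `n` if phase one is decisive, `(k+1)n` otherwise. -/
noncomputable def twoPhaseTau (P₁ P₂ : 𝒳 → ℝ) (k n : ℕ) (α₁ β₁ : ℝ)
    (ω : Fin ((k + 1) * n) → 𝒳) : ℕ :=
  if β₁ < S1 P₁ P₂ n ω / n ∧ S1 P₁ P₂ n ω / n < α₁ then (k + 1) * n else n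
section AFLaux

/-- Pad a length-`m` prefix to a length-`M` sample path with a default symbol. -/
def extPad (x₀ : 𝒳) {m M : ℕ} (ρ : Fin m → 𝒳) : Fin M → 𝒳 :=
  fun i => if h : (i : ℕ) < m then ρ ⟨i, h⟩ else x₀

lemma prodProb_eq_sum_ite (P : 𝒳 → ℝ) {N : ℕ} (S : Set (Fin N → 𝒳)) :
    prodProb P S = ∑ ω : Fin N → 𝒳, if ω ∈ S then ∏ i, P (ω i) else 0 := by
  unfold prodProb
  refine Finset.sum_congr rfl fun ω _ => ?_
  simp [Set.indicator_apply]

lemma prodProb_mono (P : 𝒳 → ℝ) (hP : ∀ x, 0 ≤ P x) {N : ℕ}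
    {S S' : Set (Fin N → 𝒳)} (h : S ⊆ S') : prodProb P S ≤ prodProb P S' := by
  rw [prodProb_eq_sum_ite, prodProb_eq_sum_ite]
  refine Finset.sum_le_sum fun ω _ => ?_
  by_cases h1 : ω ∈ S
  · rw [if_pos h1, if_pos (h h1)]
  · rw [if_neg h1]
    split_ifs with h2
    · exact Finset.prod_nonneg fun i _ => hP _
    · exact le_rfl

lemma marginal (P : 𝒳 → ℝ) (hsum : ∑ x, P x = 1) (x₀ : 𝒳) {m M : ℕ} (hm : m ≤ M)
    (A : Set (Fin M → 𝒳))
    (hA : ∀ ω ω' : Fin M → 𝒳, (∀ i : Fin M, (i : ℕ) < m → ω i = ω' i) →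
      (ω ∈ A ↔ ω' ∈ A)) :
    prodProb P A
      = ∑ ρ : Fin m → 𝒳,
          (if (extPad x₀ ρ : Fin M → 𝒳) ∈ A then ∏ i, P (ρ i) else 0) := by
  obtain ⟨k, rfl⟩ : ∃ k, M = m + k := ⟨M - m, by omega⟩
  rw [prodProb_eq_sum_ite]
  set e : ((Fin m → 𝒳) × (Fin k → 𝒳)) ≃ (Fin (m + k) → 𝒳) :=
    (Equiv.sumArrowEquivProdArrow (Fin m) (Fin k) 𝒳).symm.trans
      (Equiv.arrowCongr finSumFinEquiv (Equiv.refl 𝒳)) with he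
  rw [← Equiv.sum_comp e (fun ω => if ω ∈ A then ∏ i, P (ω i) else 0),
    Fintype.sum_prod_type]
  have he1 : ∀ (ρ : Fin m → 𝒳) (σ : Fin k → 𝒳) (i : Fin m),
      e (ρ, σ) (Fin.castAdd k i) = ρ i := by
    intro ρ σ i
    simp [he, Equiv.arrowCongr, Equiv.sumArrowEquivProdArrow]
  have he2 : ∀ (ρ : Fin m → 𝒳) (σ : Fin k → 𝒳) (j : Fin k),
      e (ρ, σ) (Fin.natAdd m j) = σ j := by
    intro ρ σ j
    simp [he, Equiv.arrowCongr, Equiv.sumArrowEquivProdArrow]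
  have hterm : ∀ (ρ : Fin m → 𝒳) (σ : Fin k → 𝒳),
      (if e (ρ, σ) ∈ A then ∏ i, P (e (ρ, σ) i) else 0)
        = (if (extPad x₀ ρ : Fin (m + k) → 𝒳) ∈ A then ∏ i, P (ρ i) else 0)
            * ∏ j, P (σ j) := by
    intro ρ σ
    have hmem : e (ρ, σ) ∈ A ↔ (extPad x₀ ρ : Fin (m + k) → 𝒳) ∈ A := by
      refine hA _ _ fun i hi => ?_
      have hi' : i = Fin.castAdd k ⟨(i : ℕ), hi⟩ := Fin.ext rfl
      rw [hi', he1]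
      simp [extPad, hi]
    have hprod : ∏ i, P (e (ρ, σ) i) = (∏ i, P (ρ i)) * ∏ j, P (σ j) := by
      rw [Fin.prod_univ_add]
      simp only [he1, he2]
    rw [hprod]
    by_cases h1 : e (ρ, σ) ∈ A
    · rw [if_pos h1, if_pos (hmem.mp h1)]
    · rw [if_neg h1, if_neg (fun h => h1 (hmem.mpr h)), zero_mul]
  refine Finset.sum_congr rfl fun ρ _ => ?_
  rw [Finset.sum_congr rfl fun σ _ => hterm ρ σ, ← Finset.mul_sum]
  have : ∑ σ : Fin k → 𝒳, ∏ j, P (σ j) = 1 := by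
    rw [← Fintype.sum_pow, hsum, one_pow]
  rw [this, mul_one]

lemma transfer (P : 𝒳 → ℝ) (hsum : ∑ x, P x = 1) (x₀ : 𝒳) {m n N : ℕ}
    (h1 : m ≤ n) (h2 : m ≤ N) (B : Set (Fin N → 𝒳))
    (hB : ∀ ω ω' : Fin N → 𝒳, (∀ i : Fin N, (i : ℕ) < m → ω i = ω' i) →
      (ω ∈ B ↔ ω' ∈ B)) :
    prodProb P {ω : Fin n → 𝒳 | (extPad x₀ ω : Fin N → 𝒳) ∈ B} = prodProb P B := by
  have hA : ∀ ω ω' : Fin n → 𝒳, (∀ i : Fin n, (i : ℕ) < m → ω i = ω' i) →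
      (ω ∈ {ω : Fin n → 𝒳 | (extPad x₀ ω : Fin N → 𝒳) ∈ B}
        ↔ ω' ∈ {ω : Fin n → 𝒳 | (extPad x₀ ω : Fin N → 𝒳) ∈ B}) := by
    intro ω ω' hag
    simp only [Set.mem_setOf_eq]
    refine hB _ _ fun i hi => ?_
    have hin : (i : ℕ) < n := lt_of_lt_of_le hi h1
    simp only [extPad, hin, dif_pos]
    exact hag ⟨(i : ℕ), hin⟩ hi
  rw [marginal P hsum x₀ h1 _ hA, marginal P hsum x₀ h2 B hB]
  refine Finset.sum_congr rfl fun ρ _ => ?_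
  refine if_congr ?_ rfl rfl
  simp only [Set.mem_setOf_eq]
  refine hB _ _ fun i hi => ?_
  have hin : (i : ℕ) < n := lt_of_lt_of_le hi h1
  simp [extPad, hin, hi]

end AFLaux

/-- If `(E₁,E₂)` is achievable by γ-almost-fixed-length tests, then `(E₁,E₂,γ)`
is achievable by fixed-length tests with rejection. -/
theorem afl_to_rejection (P₁ P₂ : 𝒳 → ℝ)
    (h1pos : ∀ x, 0 < P₁ x) (h2pos : ∀ x, 0 < P₂ x)
    (h1sum : ∑ x, P₁ x = 1) (h2sum : ∑ x, P₂ x = 1)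
    (hne : P₁ ≠ P₂)
    (γ : ℝ) (hγ : 0 < γ) (E₁ E₂ : ℝ)
    (hach : AFLAchievable P₁ P₂ γ E₁ E₂) :
    RejAchievable P₁ P₂ E₁ E₂ γ := by
  obtain ⟨hE₁, hE₂, c, hc, l, hl, H⟩ := hach
  refine ⟨hE₁, hE₂, hγ.le, fun δ hδ => ?_⟩
  obtain ⟨n₀, hn₀⟩ := H δ hδ
  refine ⟨max n₀ (⌈Real.log 2 / δ⌉₊ + 1), fun n hn => ?_⟩
  obtain ⟨N, hN, T, hτ1, hτ2, hA2b, hA1b⟩ := hn₀ n (le_trans (le_max_left _ _) hn)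
  have x₀ : 𝒳 := Classical.arbitrary 𝒳
  set m := min n N with hm
  have keyD : ∀ A : Set (Fin N → 𝒳),
      (∀ ω ω' : Fin N → 𝒳, (∀ i : Fin N, (i : ℕ) < T.τ ω → ω i = ω' i) →
        (ω ∈ A ↔ ω' ∈ A)) →
      ∀ ω ω' : Fin N → 𝒳, (∀ i : Fin N, (i : ℕ) < m → ω i = ω' i) →
      ω ∈ A ∧ T.τ ω ≤ n → ω' ∈ A ∧ T.τ ω' ≤ n := by
    rintro A hAd ω ω' hag ⟨hmem, hτ⟩
    rcases le_or_gt N n with hNn | hnN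
    · have hωω : ω = ω' := funext fun i => hag i (by have := i.isLt; omega)
      rw [← hωω]; exact ⟨hmem, hτ⟩
    · have hag' : ∀ i : Fin N, (i : ℕ) < T.τ ω → ω i = ω' i := fun i hi =>
        hag i (by omega)
      exact ⟨(hAd ω ω' hag').mp hmem, by rw [T.stopping ω ω' hag']; exact hτ⟩
  have keyΩ : ∀ ω ω' : Fin N → 𝒳, (∀ i : Fin N, (i : ℕ) < m → ω i = ω' i) →
      n < T.τ ω → n < T.τ ω' := by
    intro ω ω' hag h
    rcases le_or_gt N n with hNn | hnN
    · have hωω : ω = ω' := funext fun i => hag i (by have := i.isLt; omega)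
      rw [← hωω]; exact h
    · by_contra h'
      push_neg at h'
      have hag' : ∀ i : Fin N, (i : ℕ) < T.τ ω' → ω' i = ω i := fun i hi =>
        (hag i (by omega)).symm
      have := T.stopping ω' ω hag'
      omega
  set B1 : Set (Fin N → 𝒳) := {ω | ω ∈ T.A1 ∧ T.τ ω ≤ n} with hB1e
  set B2 : Set (Fin N → 𝒳) := {ω | ω ∈ T.A2 ∧ T.τ ω ≤ n} with hB2e
  set BΩ : Set (Fin N → 𝒳) := {ω | n < T.τ ω} with hBΩe
  have hB1d : ∀ ω ω' : Fin N → 𝒳, (∀ i : Fin N, (i : ℕ) < m → ω i = ω' i) →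
      (ω ∈ B1 ↔ ω' ∈ B1) := by
    intro ω ω' h
    simp only [hB1e, Set.mem_setOf_eq]
    exact ⟨keyD T.A1 T.adapted1 ω ω' h,
      keyD T.A1 T.adapted1 ω' ω (fun i hi => (h i hi).symm)⟩
  have hB2d : ∀ ω ω' : Fin N → 𝒳, (∀ i : Fin N, (i : ℕ) < m → ω i = ω' i) →
      (ω ∈ B2 ↔ ω' ∈ B2) := by
    intro ω ω' h
    simp only [hB2e, Set.mem_setOf_eq]
    exact ⟨keyD T.A2 T.adapted2 ω ω' h,
      keyD T.A2 T.adapted2 ω' ω (fun i hi => (h i hi).symm)⟩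
  have hBΩd : ∀ ω ω' : Fin N → 𝒳, (∀ i : Fin N, (i : ℕ) < m → ω i = ω' i) →
      (ω ∈ BΩ ↔ ω' ∈ BΩ) := by
    intro ω ω' h
    simp only [hBΩe, Set.mem_setOf_eq]
    exact ⟨keyΩ ω ω' h, keyΩ ω' ω (fun i hi => (h i hi).symm)⟩
  have hmn : m ≤ n := min_le_left n N
  have hmN : m ≤ N := min_le_right n N
  have h1nn : ∀ x, (0:ℝ) ≤ P₁ x := fun x => (h1pos x).le
  have h2nn : ∀ x, (0:ℝ) ≤ P₂ x := fun x => (h2pos x).le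
  refine ⟨{ω : Fin n → 𝒳 | (extPad x₀ ω : Fin N → 𝒳) ∈ B1},
    {ω : Fin n → 𝒳 | (extPad x₀ ω : Fin N → 𝒳) ∈ B2},
    {ω : Fin n → 𝒳 | (extPad x₀ ω : Fin N → 𝒳) ∈ BΩ}, ?_, ?_, ?_, ?_, ?_, ?_, ?_⟩
  · rw [Set.disjoint_left]
    intro ω h1' h2'
    simp only [Set.mem_setOf_eq, hB1e, hB2e] at h1' h2'
    exact Set.disjoint_left.mp T.disj h1'.1 h2'.1
  · rw [Set.disjoint_left]
    intro ω h1' h2'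
    simp only [Set.mem_setOf_eq, hB1e, hBΩe] at h1' h2'
    omega
  · rw [Set.disjoint_left]
    intro ω h1' h2'
    simp only [Set.mem_setOf_eq, hB2e, hBΩe] at h1' h2'
    omega
  · ext ω
    simp only [Set.mem_union, Set.mem_setOf_eq, Set.mem_univ, iff_true,
      hB1e, hB2e, hBΩe]
    rcases le_or_gt (T.τ (extPad x₀ ω)) n with hτ | hτ
    · have hcov : (extPad x₀ ω : Fin N → 𝒳) ∈ T.A1 ∪ T.A2 := by
        rw [T.exhaust]; exact Set.mem_univ _
      rcases hcov with h | h
      · exact Or.inl (Or.inl ⟨h, hτ⟩)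
      · exact Or.inl (Or.inr ⟨h, hτ⟩)
    · exact Or.inr hτ
  · calc prodProb P₁ {ω : Fin n → 𝒳 | (extPad x₀ ω : Fin N → 𝒳) ∈ B2}
        = prodProb P₁ B2 := transfer P₁ h1sum x₀ hmn hmN B2 hB2d
      _ ≤ prodProb P₁ T.A2 := prodProb_mono P₁ h1nn (fun ω h => h.1)
      _ ≤ Real.exp (-((E₁ - δ) * n)) := hA2b
  · calc prodProb P₂ {ω : Fin n → 𝒳 | (extPad x₀ ω : Fin N → 𝒳) ∈ B1}
        = prodProb P₂ B1 := transfer P₂ h2sum x₀ hmn hmN B1 hB1d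
      _ ≤ prodProb P₂ T.A1 := prodProb_mono P₂ h2nn (fun ω h => h.1)
      _ ≤ Real.exp (-((E₂ - δ) * n)) := hA1b
  · have hlog : Real.log 2 ≤ δ * n := by
      have hc1 : Real.log 2 / δ ≤ (⌈Real.log 2 / δ⌉₊ : ℝ) := Nat.le_ceil _
      have hge : ⌈Real.log 2 / δ⌉₊ + 1 ≤ n := le_trans (le_max_right _ _) hn
      have hc2 : (⌈Real.log 2 / δ⌉₊ : ℝ) + 1 ≤ (n : ℝ) := by exact_mod_cast hge
      have hc3 : Real.log 2 / δ ≤ (n : ℝ) := by linarith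
      calc Real.log 2 = Real.log 2 / δ * δ := by field_simp
        _ ≤ (n : ℝ) * δ := mul_le_mul_of_nonneg_right hc3 hδ.le
        _ = δ * n := mul_comm _ _
    have h2exp : (2 : ℝ) ≤ Real.exp (δ * n) := by
      calc (2 : ℝ) = Real.exp (Real.log 2) := (Real.exp_log (by norm_num)).symm
        _ ≤ Real.exp (δ * n) := Real.exp_le_exp.mpr hlog
    calc prodProb P₁ {ω : Fin n → 𝒳 | (extPad x₀ ω : Fin N → 𝒳) ∈ BΩ}
          + prodProb P₂ {ω : Fin n → 𝒳 | (extPad x₀ ω : Fin N → 𝒳) ∈ BΩ}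
        = prodProb P₁ BΩ + prodProb P₂ BΩ := by
          rw [transfer P₁ h1sum x₀ hmn hmN BΩ hBΩd,
            transfer P₂ h2sum x₀ hmn hmN BΩ hBΩd]
      _ ≤ Real.exp (-(γ * n)) + Real.exp (-(γ * n)) := add_le_add hτ1 hτ2
      _ = 2 * Real.exp (-(γ * n)) := by ring
      _ ≤ Real.exp (δ * n) * Real.exp (-(γ * n)) :=
          mul_le_mul_of_nonneg_right h2exp (Real.exp_pos _).le
      _ = Real.exp (-((γ - δ) * n)) := by rw [← Real.exp_add]; ring_nf
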